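/- Let β_0 ≤ β_1 ≤ … ≤ β_T be a positive non-decreasing sequence, ξ_0 = 0, ξ_t = ξ_{t-1} + g_t for vectors g_1,…,g_T ∈ ℝ^M, and θ_{t-1} = −∇R*_{β_{t-1}}(ξ_{t-1}). Then for every θ in the probability simplex Δ_M: Σ_{t=1}^T ⟨θ_{t-1} − θ, g_t⟩ ≤ β_T R(θ) + Σ_{t=1}^T ‖g_t‖_∞² / (2β_{t-1}), where R is the normalized entropy. -/

import Mathlib

open Real Finset

private lemma aux_D_pos {q : ℝ} (hq0 : 0 ≤ q) {x : ℝ} (hx : 0 ≤ x) :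
    0 < 1 - q + q * Real.exp x := by
  nlinarith [Real.one_le_exp hx]

private lemma hoeff_scalar {q h : ℝ} (hq0 : 0 ≤ q) (hq1 : q ≤ 1) (hh : 0 ≤ h) :
    Real.log (1 - q + q * Real.exp h) ≤ q * h + h ^ 2 / 8 := by
  set D : ℝ → ℝ := fun x => 1 - q + q * Real.exp x with hD
  have hDpos : ∀ x ∈ Set.Ici (0:ℝ), 0 < D x := fun x hx => aux_D_pos hq0 hx
  have hDd : ∀ x : ℝ, HasDerivAt D (q * Real.exp x) x := by
    intro x
    exact ((Real.hasDerivAt_exp x).const_mul q).const_add (1 - q)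
  set φ : ℝ → ℝ := fun x => q + x / 4 - q * Real.exp x / D x with hφ
  set f : ℝ → ℝ := fun x => q * x + x ^ 2 / 8 - Real.log (D x) with hf
  have hfd : ∀ x ∈ Set.Ici (0:ℝ), HasDerivAt f (φ x) x := by
    intro x hx
    have h1 : HasDerivAt (fun x => Real.log (D x)) (q * Real.exp x / D x) x :=
      (hDd x).log (ne_of_gt (hDpos x hx))
    have h2 : HasDerivAt (fun x : ℝ => q * x + x ^ 2 / 8) (q + x / 4) x := by
      have := ((hasDerivAt_id x).const_mul q).add
        (((hasDerivAt_pow 2 x)).div_const 8)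
      refine this.congr_deriv ?_
      ring
    exact h2.sub h1
  have hφd : ∀ x ∈ Set.Ici (0:ℝ),
      HasDerivAt φ (1 / 4 - q * Real.exp x * (1 - q) / (D x) ^ 2) x := by
    intro x hx
    have hdiv : HasDerivAt (fun x => q * Real.exp x / D x)
        ((q * Real.exp x * D x - q * Real.exp x * (q * Real.exp x)) / (D x) ^ 2) x :=
      ((Real.hasDerivAt_exp x).const_mul q).div (hDd x) (ne_of_gt (hDpos x hx))
    have h2 : HasDerivAt (fun x : ℝ => q + x / 4) (1 / 4) x := by
      simpa using ((hasDerivAt_id x).div_const 4).const_add q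
    have hdx : D x = 1 - q + q * Real.exp x := rfl
    have hdne : D x ≠ 0 := ne_of_gt (hDpos x hx)
    have := h2.sub hdiv
    refine this.congr_deriv ?_
    rw [hdx]
    field_simp
    ring
  have hφmono : MonotoneOn φ (Set.Ici (0:ℝ)) := by
    apply monotoneOn_of_deriv_nonneg (convex_Ici 0)
    · intro y hy
      exact ((hφd y hy).continuousAt).continuousWithinAt
    · intro y hy
      rw [interior_Ici] at hy
      exact (hφd y (le_of_lt hy : (0:ℝ) ≤ y)).differentiableAt.differentiableWithinAt
    · intro y hy
      rw [interior_Ici] at hy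
      rw [(hφd y (le_of_lt hy : (0:ℝ) ≤ y)).deriv]
      have hDy := hDpos y (le_of_lt hy : (0:ℝ) ≤ y)
      have hey := Real.one_le_exp (le_of_lt hy)
      have hsq : (0:ℝ) < (D y) ^ 2 := by positivity
      rw [sub_nonneg, div_le_iff₀ hsq]
      have hdy : D y = 1 - q + q * Real.exp y := rfl
      nlinarith [sq_nonneg ((1 - q) - q * Real.exp y)]
  have hφ0 : φ 0 = 0 := by
    have : D 0 = 1 := by simp [hD]
    simp [hφ, this]
  have hφnonneg : ∀ x ∈ Set.Ici (0:ℝ), 0 ≤ φ x := by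
    intro x hx
    rw [← hφ0]
    exact hφmono (Set.self_mem_Ici) hx hx
  have hfmono : MonotoneOn f (Set.Ici (0:ℝ)) := by
    apply monotoneOn_of_deriv_nonneg (convex_Ici 0)
    · intro y hy
      exact ((hfd y hy).continuousAt).continuousWithinAt
    · intro y hy
      rw [interior_Ici] at hy
      exact (hfd y (le_of_lt hy : (0:ℝ) ≤ y)).differentiableAt.differentiableWithinAt
    · intro y hy
      rw [interior_Ici] at hy
      rw [(hfd y (le_of_lt hy : (0:ℝ) ≤ y)).deriv]
      exact hφnonneg y (le_of_lt hy : (0:ℝ) ≤ y)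
  have hf0 : f 0 = 0 := by
    have : D 0 = 1 := by simp [hD]
    simp [hf, this]
  have := hfmono (Set.self_mem_Ici) hh hh
  rw [hf0] at this
  have hfh : (0:ℝ) ≤ q * h + h ^ 2 / 8 - Real.log (D h) := this
  linarith

private lemma hoeffding_fin {M : ℕ} (p X : Fin M → ℝ) (hp0 : ∀ j, 0 ≤ p j)
    (hp1 : ∑ j, p j = 1) (c : ℝ) (hX : ∀ j, |X j| ≤ c) :
    Real.log (∑ j, p j * Real.exp (X j)) ≤ (∑ j, p j * X j) + c ^ 2 / 2 := by
  have hMpos : 0 < M := by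
    by_contra hc
    interval_cases M
    simp at hp1
  have hc0 : 0 ≤ c := le_trans (abs_nonneg _) (hX ⟨0, hMpos⟩)
  set μ := ∑ j, p j * X j with hμ
  have hμle : μ ≤ c := by
    have : μ ≤ ∑ j, p j * c := by
      apply Finset.sum_le_sum
      intro j _
      have := (abs_le.mp (hX j)).2
      nlinarith [hp0 j]
    calc μ ≤ ∑ j, p j * c := this
    _ = c := by rw [← Finset.sum_mul, hp1]; ring
  have hμge : -c ≤ μ := by
    have : ∑ j, p j * (-c) ≤ μ := by
      apply Finset.sum_le_sum
      intro j _
      have := (abs_le.mp (hX j)).1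
      nlinarith [hp0 j]
    calc -c = ∑ j, p j * (-c) := by rw [← Finset.sum_mul, hp1]; ring
    _ ≤ μ := this
  rcases eq_or_lt_of_le hc0 with hc | hc
  · -- c = 0
    have hX0 : ∀ j, X j = 0 := fun j => abs_eq_zero.mp (le_antisymm (hc ▸ hX j) (abs_nonneg _))
    simp only [hX0, Real.exp_zero, mul_one, mul_zero, hp1, Finset.sum_const_zero,
      Real.log_one, ← hc]
    norm_num
    simp [hμ, hX0]
  · -- c > 0
    set q := (μ + c) / (2 * c) with hq
    have hq0 : 0 ≤ q := by
      apply div_nonneg (by linarith) (by linarith)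
    have hq1 : q ≤ 1 := by
      rw [hq, div_le_one (by linarith)]
      linarith
    have hchord : ∀ j, Real.exp (X j) ≤
        ((c - X j) * Real.exp (-c) + (X j + c) * Real.exp c) / (2 * c) := by
      intro j
      have hab : (c - X j) / (2 * c) + (X j + c) / (2 * c) = 1 := by
        field_simp; ring
      have hX2 := abs_le.mp (hX j)
      have ha : 0 ≤ (c - X j) / (2 * c) := by
        apply div_nonneg (by linarith [hX2.2]) (by linarith)
      have hb : 0 ≤ (X j + c) / (2 * c) := by
        apply div_nonneg (by linarith [hX2.1]) (by linarith)
      have := convexOn_exp.2 (Set.mem_univ (-c)) (Set.mem_univ c) ha hb hab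
      have hcomb : ((c - X j) / (2 * c)) • (-c) + ((X j + c) / (2 * c)) • c = X j := by
        rw [smul_eq_mul, smul_eq_mul]
        have h2c : (2*c) ≠ 0 := by positivity
        field_simp
        ring
      rw [hcomb] at this
      rw [smul_eq_mul, smul_eq_mul] at this
      calc Real.exp (X j) ≤ (c - X j) / (2 * c) * Real.exp (-c) + (X j + c) / (2 * c) * Real.exp c := this
      _ = ((c - X j) * Real.exp (-c) + (X j + c) * Real.exp c) / (2 * c) := by ring
    have hsum : ∑ j, p j * Real.exp (X j) ≤ Real.exp (-c) * (1 - q + q * Real.exp (2 * c)) := by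
      have h1 : ∑ j, p j * Real.exp (X j) ≤
          ∑ j, p j * (((c - X j) * Real.exp (-c) + (X j + c) * Real.exp c) / (2 * c)) := by
        apply Finset.sum_le_sum
        intro j _
        exact mul_le_mul_of_nonneg_left (hchord j) (hp0 j)
      have h2 : ∑ j, p j * (((c - X j) * Real.exp (-c) + (X j + c) * Real.exp c) / (2 * c))
          = Real.exp (-c) * (1 - q + q * Real.exp (2 * c)) := by
        have expand : ∀ j, p j * (((c - X j) * Real.exp (-c) + (X j + c) * Real.exp c) / (2 * c))
            = (Real.exp (-c) / (2*c)) * (p j * c - p j * X j)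
              + (Real.exp c / (2*c)) * (p j * X j + p j * c) := by
          intro j; field_simp
        rw [Finset.sum_congr rfl (fun j _ => expand j), Finset.sum_add_distrib,
          ← Finset.mul_sum, ← Finset.mul_sum, Finset.sum_sub_distrib, Finset.sum_add_distrib,
          ← Finset.sum_mul, hp1, ← hμ]
        have h2c : (2 : ℝ) * c ≠ 0 := by positivity
        rw [hq]
        have : Real.exp (2 * c) = Real.exp c / Real.exp (-c) := by
          rw [← Real.exp_sub]; ring_nf
        rw [this]
        field_simp
        ring
      linarith
    have hpos : 0 < ∑ j, p j * Real.exp (X j) := by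
      have : Real.exp (-c) = ∑ j, p j * Real.exp (-c) := by
        rw [← Finset.sum_mul, hp1, one_mul]
      have hle : Real.exp (-c) ≤ ∑ j, p j * Real.exp (X j) := by
        rw [this]
        apply Finset.sum_le_sum
        intro j _
        exact mul_le_mul_of_nonneg_left (Real.exp_le_exp.mpr (abs_le.mp (hX j)).1) (hp0 j)
      linarith [Real.exp_pos (-c)]
    calc Real.log (∑ j, p j * Real.exp (X j))
        ≤ Real.log (Real.exp (-c) * (1 - q + q * Real.exp (2 * c))) :=
          Real.log_le_log hpos hsum
      _ = -c + Real.log (1 - q + q * Real.exp (2 * c)) := by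
          rw [Real.log_mul (Real.exp_ne_zero _) ?hne, Real.log_exp]
          case hne =>
            have := aux_D_pos hq0 (x := 2 * c) (by linarith)
            exact ne_of_gt this
      _ ≤ -c + (q * (2 * c) + (2 * c) ^ 2 / 8) := by
          linarith [hoeff_scalar hq0 hq1 (show (0:ℝ) ≤ 2 * c by linarith)]
      _ = μ + c ^ 2 / 2 := by
          rw [hq]; field_simp; ring

private lemma gibbs_fin {M : ℕ} (θ a : Fin M → ℝ) (hθ0 : ∀ j, 0 ≤ θ j)
    (hθ1 : ∑ j, θ j = 1) (ha : ∀ j, 0 < a j) :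
    ∑ j, θ j * Real.log (a j) - ∑ j, θ j * Real.log (θ j) ≤ Real.log (∑ j, a j) := by
  set s : Finset (Fin M) := Finset.univ.filter (fun j => θ j ≠ 0) with hs
  have hθpos : ∀ j ∈ s, 0 < θ j := by
    intro j hj
    rw [hs, Finset.mem_filter] at hj
    exact lt_of_le_of_ne (hθ0 j) (Ne.symm hj.2)
  have hsum1 : ∑ j ∈ s, θ j = 1 := by
    rw [hs, Finset.sum_filter_ne_zero, hθ1]
  have jensen := strictConcaveOn_log_Ioi.concaveOn.le_map_sum
    (t := s) (w := θ) (p := fun j => a j / θ j)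
    (fun j hj => (hθ0 j)) hsum1
    (fun j hj => Set.mem_Ioi.mpr (div_pos (ha j) (hθpos j hj)))
  have hrw : ∑ j ∈ s, θ j • (a j / θ j) = ∑ j ∈ s, a j := by
    apply Finset.sum_congr rfl
    intro j hj
    rw [smul_eq_mul, mul_div_cancel₀ _ (ne_of_gt (hθpos j hj))]
  rw [hrw] at jensen
  have hsa : 0 < ∑ j ∈ s, a j := by
    apply Finset.sum_pos (fun j _ => ha j)
    -- s nonempty
    by_contra hne
    rw [Finset.not_nonempty_iff_eq_empty] at hne
    rw [hne] at hsum1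
    simp at hsum1
  have hmono : Real.log (∑ j ∈ s, a j) ≤ Real.log (∑ j, a j) := by
    apply Real.log_le_log hsa
    apply Finset.sum_le_sum_of_subset_of_nonneg (Finset.filter_subset _ _)
    exact fun j _ _ => le_of_lt (ha j)
  have hL : ∑ j ∈ s, θ j • Real.log (a j / θ j)
      = ∑ j, θ j * Real.log (a j) - ∑ j, θ j * Real.log (θ j) := by
    have h1 : ∀ j ∈ s, θ j • Real.log (a j / θ j)
        = θ j * Real.log (a j) - θ j * Real.log (θ j) := by
      intro j hj
      rw [smul_eq_mul, Real.log_div (ne_of_gt (ha j)) (ne_of_gt (hθpos j hj))]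
      ring
    rw [Finset.sum_congr rfl h1, Finset.sum_sub_distrib]
    have h2 : ∀ (f : Fin M → ℝ), ∑ j ∈ s, θ j * f j = ∑ j, θ j * f j := by
      intro f
      apply Finset.sum_subset (Finset.filter_subset _ _)
      intro j _ hj
      simp only [hs, Finset.mem_filter, Finset.mem_univ, true_and, not_not] at hj
      simp [hj]
    rw [h2, h2]
  rw [hL] at jensen
  linarith

private noncomputable def PhiF (M : ℕ) (β : ℝ) (z : Fin M → ℝ) : ℝ :=
  β * Real.log ((∑ j, Real.exp (-z j / β)) / M)

private lemma S_pos {M : ℕ} (hM : 1 ≤ M) (β : ℝ) (z : Fin M → ℝ) :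
    0 < ∑ j, Real.exp (-z j / β) :=
  Finset.sum_pos (fun j _ => Real.exp_pos _) (by simp [Finset.univ_nonempty_iff, Fin.pos_iff_nonempty.mp hM])

private lemma Mcast_pos {M : ℕ} (hM : 1 ≤ M) : (0:ℝ) < M := by
  exact_mod_cast Nat.lt_of_lt_of_le Nat.zero_lt_one hM

private lemma PhiF_eq {M : ℕ} (hM : 1 ≤ M) (β : ℝ) (z : Fin M → ℝ) :
    PhiF M β z = β * (Real.log (∑ j, Real.exp (-z j / β)) - Real.log M) := by
  rw [PhiF, Real.log_div (ne_of_gt (S_pos hM β z)) (ne_of_gt (Mcast_pos hM))]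

-- Fenchel-Young
private lemma fenchel_young {M : ℕ} (hM : 1 ≤ M) {β : ℝ} (hβ : 0 < β) (z θ : Fin M → ℝ)
    (hθ0 : ∀ j, 0 ≤ θ j) (hθ1 : ∑ j, θ j = 1) :
    -∑ j, θ j * z j - PhiF M β z ≤ β * (Real.log M + ∑ j, θ j * Real.log (θ j)) := by
  have hS := S_pos hM β z
  have hMR : (0:ℝ) < M := by exact_mod_cast Nat.lt_of_lt_of_le Nat.zero_lt_one hM
  have hg := gibbs_fin θ (fun j => Real.exp (-z j / β)) hθ0 hθ1 (fun j => Real.exp_pos _)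
  simp only [Real.log_exp] at hg
  have hPhi := PhiF_eq hM β z
  have hzsum : ∑ j, θ j * (-z j / β) = (-∑ j, θ j * z j) / β := by
    rw [eq_div_iff (ne_of_gt hβ), Finset.sum_mul, ← Finset.sum_neg_distrib]
    apply Finset.sum_congr rfl
    intro j _
    field_simp
  rw [hzsum] at hg
  rw [hPhi]
  have := mul_le_mul_of_nonneg_left hg (le_of_lt hβ)
  have hne : β ≠ 0 := ne_of_gt hβ
  field_simp at this ⊢
  nlinarith [this]

private lemma softmax_simplex {M : ℕ} (hM : 1 ≤ M) (β : ℝ) (z : Fin M → ℝ) :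
    (∀ j, 0 ≤ Real.exp (-z j / β) / ∑ k, Real.exp (-z k / β)) ∧
    ∑ j, Real.exp (-z j / β) / ∑ k, Real.exp (-z k / β) = 1 := by
  have hS := S_pos hM β z
  constructor
  · exact fun j => div_nonneg (le_of_lt (Real.exp_pos _)) (le_of_lt hS)
  · rw [← Finset.sum_div, div_self (ne_of_gt hS)]

private lemma entropy_nonneg {M : ℕ} (hM : 1 ≤ M) (θ : Fin M → ℝ)
    (hθ0 : ∀ j, 0 ≤ θ j) (hθ1 : ∑ j, θ j = 1) :
    0 ≤ Real.log M + ∑ j, θ j * Real.log (θ j) := by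
  have := fenchel_young hM one_pos (fun _ => (0:ℝ)) θ hθ0 hθ1
  have hPhi0 : PhiF M 1 (fun _ => (0:ℝ)) = 0 := by
    rw [PhiF]
    simp [Finset.card_univ]
  rw [hPhi0] at this
  simpa using this

private lemma PhiF_attain {M : ℕ} (hM : 1 ≤ M) {β : ℝ} (hβ : 0 < β) (z : Fin M → ℝ) :
    PhiF M β z =
      -∑ j, (Real.exp (-z j / β) / ∑ k, Real.exp (-z k / β)) * z j
      - β * (Real.log M + ∑ j, (Real.exp (-z j / β) / ∑ k, Real.exp (-z k / β)) *
          Real.log (Real.exp (-z j / β) / ∑ k, Real.exp (-z k / β))) := by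
  have hS := S_pos hM β z
  set S := ∑ k, Real.exp (-z k / β) with hSdef
  set p : Fin M → ℝ := fun j => Real.exp (-z j / β) / S with hp
  have hlogp : ∀ j, Real.log (p j) = -z j / β - Real.log S := by
    intro j
    rw [hp]
    rw [Real.log_div (ne_of_gt (Real.exp_pos _)) (ne_of_gt hS), Real.log_exp]
  have hsum1 : ∑ j, p j = 1 := (softmax_simplex hM β z).2
  have hent : ∑ j, p j * Real.log (p j) = (∑ j, p j * (-z j / β)) - Real.log S := by
    rw [Finset.sum_congr rfl (fun j _ => by rw [hlogp j, mul_sub])]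
    rw [Finset.sum_sub_distrib, ← Finset.sum_mul, hsum1, one_mul]
  have key : ∀ a b : ℝ, β * (a * (-b / β)) = -(a * b) := by
    intro a b
    field_simp
  have hBA : β * ∑ j, p j * (-z j / β) = -∑ j, p j * z j := by
    rw [Finset.mul_sum, ← Finset.sum_neg_distrib]
    exact Finset.sum_congr rfl (fun j _ => key _ _)
  rw [PhiF_eq hM β z, hent]
  linear_combination hBA

private lemma PhiF_mono {M : ℕ} (hM : 1 ≤ M) {β β' : ℝ} (hβ : 0 < β) (hββ' : β ≤ β')
    (z : Fin M → ℝ) : PhiF M β' z ≤ PhiF M β z := by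
  have hβ' : 0 < β' := lt_of_lt_of_le hβ hββ'
  set p : Fin M → ℝ := fun j => Real.exp (-z j / β') / ∑ k, Real.exp (-z k / β') with hp
  have hps := softmax_simplex hM β' z
  have hR := entropy_nonneg hM p hps.1 hps.2
  have hatt := PhiF_attain hM hβ' z
  have hfy := fenchel_young hM hβ z p hps.1 hps.2
  have : -∑ j, p j * z j - β' * (Real.log M + ∑ j, p j * Real.log (p j))
      ≤ -∑ j, p j * z j - β * (Real.log M + ∑ j, p j * Real.log (p j)) := by
    nlinarith
  calc PhiF M β' z = _ := hatt
  _ ≤ -∑ j, p j * z j - β * (Real.log M + ∑ j, p j * Real.log (p j)) := this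
  _ ≤ PhiF M β z := by linarith

private lemma PhiF_step {M : ℕ} (hM : 1 ≤ M) {β : ℝ} (hβ : 0 < β) (z gv : Fin M → ℝ) :
    PhiF M β (z + gv) ≤ PhiF M β z
      - ∑ j, (Real.exp (-z j / β) / ∑ k, Real.exp (-z k / β)) * gv j
      + ‖gv‖ ^ 2 / (2 * β) := by
  have hS := S_pos hM β z
  have hS' := S_pos hM β (z + gv)
  set S := ∑ k, Real.exp (-z k / β) with hSdef
  set S' := ∑ k, Real.exp (-(z + gv) k / β) with hS'def
  set p : Fin M → ℝ := fun j => Real.exp (-z j / β) / S with hp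
  have hps := softmax_simplex hM β z
  have hX : ∀ j, |(-gv j / β)| ≤ ‖gv‖ / β := by
    intro j
    rw [abs_div, abs_neg, abs_of_pos hβ]
    have h1 : |gv j| ≤ ‖gv‖ := by
      rw [← Real.norm_eq_abs]
      exact norm_le_pi_norm gv j
    gcongr
  have hH := hoeffding_fin p (fun j => -gv j / β) hps.1 hps.2 (‖gv‖ / β) hX
  have hkey : ∑ j, p j * Real.exp (-gv j / β) = S' / S := by
    rw [hS'def, Finset.sum_div]
    apply Finset.sum_congr rfl
    intro j _
    have harg : -((z + gv) j) / β = -z j / β + -gv j / β := by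
      rw [Pi.add_apply]; ring
    rw [harg, Real.exp_add, hp]
    ring
  rw [hkey] at hH
  rw [Real.log_div (ne_of_gt hS') (ne_of_gt hS)] at hH
  have key : ∀ a b : ℝ, β * (a * (-b / β)) = -(a * b) := by
    intro a b
    field_simp
  have hBA : β * ∑ j, p j * (-gv j / β) = -∑ j, p j * gv j := by
    rw [Finset.mul_sum, ← Finset.sum_neg_distrib]
    exact Finset.sum_congr rfl (fun j _ => key _ _)
  have hc2 : β * ((‖gv‖ / β) ^ 2 / 2) = ‖gv‖ ^ 2 / (2 * β) := by
    field_simp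
  have hmul := mul_le_mul_of_nonneg_left hH (le_of_lt hβ)
  rw [PhiF_eq hM β (z + gv), PhiF_eq hM β z]
  rw [mul_add, hBA, hc2] at hmul
  nlinarith [hmul]

/-- Mirror-descent telescoping lemma (Juditsky et al., Proposition 2):
with increasing regularization parameters `β_t`, iterates `ξ_t = ξ_{t-1} + g_t`,
`ξ_0 = 0`, and `θ_{t-1} = −∇R*_{β_{t-1}}(ξ_{t-1})` the softmax, for every `θ ∈ Δ_M`,
`Σ_t ⟨θ_{t-1} − θ, g_t⟩ ≤ β_T R(θ) + Σ_t ‖g_t‖_∞²/(2β_{t-1})`. -/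
theorem mirror_descent_regret_bound (M : ℕ) (hM : 1 ≤ M) (T : ℕ)
    (β : ℕ → ℝ) (hβpos : ∀ t, 0 < β t) (hβmono : Monotone β)
    (g : ℕ → Fin M → ℝ) (ξ : ℕ → Fin M → ℝ) (θs : ℕ → Fin M → ℝ)
    (hξ0 : ξ 0 = 0) (hξ : ∀ t, ξ (t + 1) = ξ t + g (t + 1))
    (hθs : ∀ t, θs t = fun j =>
        Real.exp (-ξ t j / β t) / ∑ k, Real.exp (-ξ t k / β t))
    (θ : Fin M → ℝ) (hθ : θ ∈ stdSimplex ℝ (Fin M)) :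
    ∑ t ∈ Finset.range T, ∑ j, (θs t j - θ j) * g (t + 1) j ≤
      β T * (Real.log M + ∑ j, θ j * Real.log (θ j)) +
        ∑ t ∈ Finset.range T, ‖g (t + 1)‖ ^ 2 / (2 * β t) := by
  set A : ℕ → ℝ := fun t => PhiF M (β t) (ξ t) with hA
  -- per-step bound
  have hstep : ∀ t, ∑ j, θs t j * g (t + 1) j ≤
      A t - A (t + 1) + ‖g (t + 1)‖ ^ 2 / (2 * β t) := by
    intro t
    have h1 := PhiF_step hM (hβpos t) (ξ t) (g (t + 1))
    rw [← hξ t] at h1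
    have h2 := PhiF_mono hM (hβpos t) (hβmono (Nat.le_succ t)) (ξ (t + 1))
    have h3 : ∑ j, θs t j * g (t + 1) j =
        ∑ j, (Real.exp (-ξ t j / β t) / ∑ k, Real.exp (-ξ t k / β t)) * g (t + 1) j := by
      rw [hθs t]
    rw [h3]
    simp only [hA]
    linarith
  -- telescoping sum
  have hsum1 : ∑ t ∈ Finset.range T, ∑ j, θs t j * g (t + 1) j ≤
      A 0 - A T + ∑ t ∈ Finset.range T, ‖g (t + 1)‖ ^ 2 / (2 * β t) := by
    calc ∑ t ∈ Finset.range T, ∑ j, θs t j * g (t + 1) j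
        ≤ ∑ t ∈ Finset.range T, (A t - A (t + 1) + ‖g (t + 1)‖ ^ 2 / (2 * β t)) :=
          Finset.sum_le_sum (fun t _ => hstep t)
      _ = A 0 - A T + ∑ t ∈ Finset.range T, ‖g (t + 1)‖ ^ 2 / (2 * β t) := by
          rw [Finset.sum_add_distrib, Finset.sum_range_sub']
  have hA0 : A 0 = 0 := by
    have hexp : ∑ j : Fin M, Real.exp (-ξ 0 j / β 0) = (M:ℝ) := by
      rw [hξ0]
      simp [Finset.card_univ]
    simp only [hA, PhiF, hexp, div_self (ne_of_gt (Mcast_pos hM)), Real.log_one, mul_zero]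
  -- ξ T as a sum
  have hξsum : ∀ n, ξ n = fun j => ∑ t ∈ Finset.range n, g (t + 1) j := by
    intro n
    induction n with
    | zero => funext j; simp [hξ0]
    | succ n ih =>
        funext j
        rw [hξ n, Pi.add_apply, ih]
        simp [Finset.sum_range_succ]
  have hsum2 : ∑ t ∈ Finset.range T, ∑ j, θ j * g (t + 1) j = ∑ j, θ j * ξ T j := by
    rw [Finset.sum_comm]
    apply Finset.sum_congr rfl
    intro j _
    rw [hξsum T, ← Finset.mul_sum]
  -- Fenchel-Young at time T
  have hfy := fenchel_young hM (hβpos T) (ξ T) θ hθ.1 hθ.2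
  have hAT : PhiF M (β T) (ξ T) = A T := rfl
  rw [hAT] at hfy
  -- combine
  have hsplit : ∑ t ∈ Finset.range T, ∑ j, (θs t j - θ j) * g (t + 1) j =
      (∑ t ∈ Finset.range T, ∑ j, θs t j * g (t + 1) j)
        - ∑ t ∈ Finset.range T, ∑ j, θ j * g (t + 1) j := by
    rw [← Finset.sum_sub_distrib]
    apply Finset.sum_congr rfl
    intro t _
    rw [← Finset.sum_sub_distrib]
    apply Finset.sum_congr rfl
    intro j _
    ring
  rw [hsplit, hsum2]
  linarith
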